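/- If Γ₁ and Γ₂ are finitely generated virtually nilpotent groups that are commensurable (i.e., they contain isomorphic subgroups of finite index), then vc(Γ₁) = vc(Γ₂). -/

import Mathlib

noncomputable def vc (G : Type*) [Group G] : ℕ :=
  sInf {n : ℕ | ∃ (H : Subgroup G) (_ : H.FiniteIndex) (hn : Group.IsNilpotent H),
    @Group.nilpotencyClass H _ = n}

section aux

variable {G G' : Type*} [Group G] [Group G']

lemma myNilpClass_congr [Group.IsNilpotent G] [Group.IsNilpotent G'] (e : G ≃* G') :
    Group.nilpotencyClass G = Group.nilpotencyClass G' :=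
  le_antisymm (nilpotencyClass_le_of_surjective e.symm.toMonoidHom e.symm.surjective)
    (nilpotencyClass_le_of_surjective e.toMonoidHom e.surjective)

/-- the natural injection `N.subgroupOf H →* N`. -/
def restrictHom (N H : Subgroup G) : (N.subgroupOf H) →* N where
  toFun x := ⟨(x : H), x.2⟩
  map_one' := rfl
  map_mul' _ _ := rfl

lemma restrictHom_inj (N H : Subgroup G) : Function.Injective (restrictHom N H) := by
  intro a b h
  have : (((restrictHom N H) a : N) : G) = (((restrictHom N H) b : N) : G) :=
    congrArg (fun (x : N) => (x : G)) h
  exact Subtype.ext (Subtype.ext this)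

/-- `N.subgroupOf H` is nilpotent of class at most that of `N`, when `N` is nilpotent. -/
lemma subgroupOf_nilpotent (N H : Subgroup G) (hN : Group.IsNilpotent N) :
    ∃ hn : Group.IsNilpotent (N.subgroupOf H),
      @Group.nilpotencyClass (N.subgroupOf H) _ ≤ @Group.nilpotencyClass N _ := by
  have e : (N.subgroupOf H) ≃* (restrictHom N H).range :=
    MonoidHom.ofInjective (restrictHom_inj N H)
  have h1 : Group.IsNilpotent ((restrictHom N H).range) := Subgroup.isNilpotent _
  have hn : Group.IsNilpotent (N.subgroupOf H) := (Group.isNilpotent_congr e).mpr h1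
  refine ⟨hn, ?_⟩
  calc Group.nilpotencyClass (N.subgroupOf H)
      = Group.nilpotencyClass ((restrictHom N H).range) := myNilpClass_congr e
    _ ≤ Group.nilpotencyClass N := Subgroup.nilpotencyClass_le _

lemma vc_eq_subgroup (H : Subgroup G) [hFI : H.FiniteIndex]
    (hvn : ∃ K : Subgroup G, K.FiniteIndex ∧ Group.IsNilpotent K) : vc H = vc G := by
  obtain ⟨K, hKfi, hKn⟩ := hvn
  have hTne : {n : ℕ | ∃ (N : Subgroup G) (_ : N.FiniteIndex) (hn : Group.IsNilpotent N),
      @Group.nilpotencyClass N _ = n}.Nonempty := ⟨_, K, hKfi, hKn, rfl⟩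
  obtain ⟨hKH, _⟩ := subgroupOf_nilpotent K H hKn
  have hSne : {n : ℕ | ∃ (M : Subgroup H) (_ : M.FiniteIndex) (hn : Group.IsNilpotent M),
      @Group.nilpotencyClass M _ = n}.Nonempty :=
    ⟨_, K.subgroupOf H, Subgroup.instFiniteIndex_subgroupOf K H, hKH, rfl⟩
  apply le_antisymm
  · -- vc H ≤ vc G
    obtain ⟨N, hNfi, hNn, hNc⟩ := Nat.sInf_mem hTne
    obtain ⟨hn, hle⟩ := subgroupOf_nilpotent N H hNn
    calc vc H ≤ Group.nilpotencyClass (N.subgroupOf H) :=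
          Nat.sInf_le ⟨N.subgroupOf H, Subgroup.instFiniteIndex_subgroupOf N H, hn, rfl⟩
      _ ≤ Group.nilpotencyClass N := hle
      _ = vc G := hNc
  · -- vc G ≤ vc H
    obtain ⟨M, hMfi, hMn, hMc⟩ := Nat.sInf_mem hSne
    have eMap : M ≃* M.map H.subtype :=
      Subgroup.equivMapOfInjective M H.subtype H.subtype_injective
    have hmapn : Group.IsNilpotent (M.map H.subtype) := (Group.isNilpotent_congr eMap).mp hMn
    have hmapfi : (M.map H.subtype).FiniteIndex := by
      constructor
      rw [Subgroup.index_map_subtype]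
      exact Nat.mul_ne_zero hMfi.index_ne_zero hFI.index_ne_zero
    calc vc G ≤ Group.nilpotencyClass (M.map H.subtype) :=
          Nat.sInf_le ⟨M.map H.subtype, hmapfi, hmapn, rfl⟩
      _ = Group.nilpotencyClass M := (myNilpClass_congr eMap).symm
      _ = vc H := hMc

lemma vc_set_subset (f : G ≃* G') :
    {n : ℕ | ∃ (N : Subgroup G) (_ : N.FiniteIndex) (hn : Group.IsNilpotent N),
      @Group.nilpotencyClass N _ = n} ⊆
    {n : ℕ | ∃ (N : Subgroup G') (_ : N.FiniteIndex) (hn : Group.IsNilpotent N),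
      @Group.nilpotencyClass N _ = n} := by
  rintro n ⟨N, hNfi, hNn, rfl⟩
  haveI := hNn
  have eMap : N ≃* N.map f.toMonoidHom :=
    Subgroup.equivMapOfInjective N f.toMonoidHom f.injective
  have hfin : (N.map f.toMonoidHom).FiniteIndex := by
    constructor
    rw [Subgroup.index_map_of_injective _ f.injective, MonoidHom.range_eq_top.mpr f.surjective,
      Subgroup.index_top, mul_one]
    exact hNfi.index_ne_zero
  haveI hmn := (Group.isNilpotent_congr eMap).mp hNn
  exact ⟨N.map f.toMonoidHom, hfin, hmn, (myNilpClass_congr eMap).symm⟩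

lemma vc_congr (e : G ≃* G') : vc G = vc G' :=
  congrArg sInf (le_antisymm (vc_set_subset e) (vc_set_subset e.symm))

end aux

theorem stmt15 (Γ₁ Γ₂ : Type*) [Group Γ₁] [Group Γ₂] [Group.FG Γ₁] [Group.FG Γ₂]
    (hvn₁ : ∃ H : Subgroup Γ₁, H.FiniteIndex ∧ Group.IsNilpotent H)
    (hvn₂ : ∃ H : Subgroup Γ₂, H.FiniteIndex ∧ Group.IsNilpotent H)
    (H₁ : Subgroup Γ₁) (H₂ : Subgroup Γ₂) (hi₁ : H₁.FiniteIndex) (hi₂ : H₂.FiniteIndex)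
    (e : H₁ ≃* H₂) :
    vc Γ₁ = vc Γ₂ := by
  have := hi₁; have := hi₂
  calc vc Γ₁ = vc H₁ := (vc_eq_subgroup H₁ hvn₁).symm
    _ = vc H₂ := vc_congr e
    _ = vc Γ₂ := vc_eq_subgroup H₂ hvn₂
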